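/- Let r ≥ 1 be an integer, τ_L < τ_U reals, and τ_L = t_0 < t_1 < … < t_G = τ_U a grid. Let g : ℝ → ℝ vanish outside (−1,1) and set d := inf over all real polynomials p of degree at most r of sup_{x ∈ [−1,1]} |g(x) − p(x)|. Suppose s ∈ ℝ and h > 0 satisfy [s−h, s+h] ⊆ [t_ν, t_{ν+1}] for some ν, and define Q(τ) := a·τ + c·g((τ − s)/h) for reals a and c > 0. Then every piecewise polynomial P of degree at most r on the grid satisfies sup_{τ ∈ [τ_L, τ_U]} |Q(τ) − P(τ)| ≥ c·d. -/

import Mathlib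

theorem stmt13 (r : ℕ) (hr : 1 ≤ r) (τL τU : ℝ) (hτ : τL < τU)
    (G : ℕ) (t : ℕ → ℝ)
    (ht0 : t 0 = τL) (htG : t G = τU) (htmono : ∀ j < G, t j < t (j + 1))
    (g : ℝ → ℝ) (hg : ∀ x, x ∉ Set.Ioo (-1 : ℝ) 1 → g x = 0)
    (s h : ℝ) (hh : 0 < h) (ν : ℕ) (hν : ν < G)
    (hsub : Set.Icc (s - h) (s + h) ⊆ Set.Icc (t ν) (t (ν + 1)))
    (a c : ℝ) (hc : 0 < c)
    (P : ℝ → ℝ)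
    (hP : ∀ j < G, ∃ p : Polynomial ℝ, p.natDegree ≤ r ∧
        ∀ τ ∈ Set.Icc (t j) (t (j + 1)), P τ = p.eval τ)
    (d : ℝ)
    (hd : d = sInf {M : ℝ | ∃ p : Polynomial ℝ, p.natDegree ≤ r ∧
        ∀ x ∈ Set.Icc (-1 : ℝ) 1, |g x - p.eval x| ≤ M}) :
    ∀ M : ℝ, (∀ τ ∈ Set.Icc τL τU, |(a * τ + c * g ((τ - s) / h)) - P τ| ≤ M) →
      c * d ≤ M := by
  intro M hM
  -- monotonicity of the grid
  have key : ∀ j ≤ G, ∀ i ≤ j, t i ≤ t j := by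
    intro j hj
    induction j with
    | zero => intro i hi; simp [Nat.le_zero.mp hi]
    | succ n ih =>
      intro i hi
      rcases Nat.lt_or_ge i (n + 1) with hlt | hge
      · exact le_trans (ih (by omega) i (by omega)) (le_of_lt (htmono n (by omega)))
      · have : i = n + 1 := by omega
        simp [this]
  have hsubU : Set.Icc (t ν) (t (ν + 1)) ⊆ Set.Icc τL τU := by
    intro x hx
    exact ⟨ht0 ▸ le_trans (key ν (by omega) 0 (by omega)) hx.1,
      htG ▸ le_trans hx.2 (key G le_rfl (ν + 1) (by omega))⟩
  obtain ⟨p, hpdeg, hpval⟩ := hP ν hν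
  set L : Polynomial ℝ := Polynomial.C h * Polynomial.X + Polynomial.C s with hL
  set q : Polynomial ℝ :=
    Polynomial.C (1 / c) * (p.comp L - Polynomial.C a * L) with hq
  have hLdeg : L.natDegree ≤ 1 := Polynomial.natDegree_linear_le
  have hqdeg : q.natDegree ≤ r := by
    refine le_trans (Polynomial.natDegree_C_mul_le _ _) ?_
    refine le_trans (Polynomial.natDegree_sub_le _ _) (max_le ?_ ?_)
    · exact le_trans (Polynomial.natDegree_comp_le)
        (le_trans (Nat.mul_le_mul hpdeg hLdeg) (by omega))
    · exact le_trans (Polynomial.natDegree_C_mul_le _ _) (le_trans hLdeg hr)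
  have hmem : (M / c) ∈ {M : ℝ | ∃ p : Polynomial ℝ, p.natDegree ≤ r ∧
      ∀ x ∈ Set.Icc (-1 : ℝ) 1, |g x - p.eval x| ≤ M} := by
    refine ⟨q, hqdeg, ?_⟩
    intro x hx
    have hτmem : s + h * x ∈ Set.Icc (s - h) (s + h) := by
      constructor <;> nlinarith [hx.1, hx.2]
    have hτmem' := hsub hτmem
    have hPval : P (s + h * x) = p.eval (s + h * x) := hpval _ hτmem'
    have hbound := hM (s + h * x) (hsubU hτmem')
    have harg : (s + h * x - s) / h = x := by field_simp; ring
    rw [harg, hPval] at hbound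
    have hqev : q.eval x = (p.eval (s + h * x) - a * (s + h * x)) / c := by
      simp [hq, hL, Polynomial.eval_comp]
      ring
    rw [hqev]
    have hE : g x - (Polynomial.eval (s + h * x) p - a * (s + h * x)) / c
        = (a * (s + h * x) + c * g x - Polynomial.eval (s + h * x) p) / c := by
      field_simp; ring
    rw [hE, abs_div, abs_of_pos hc]
    gcongr
  have hbdd : BddBelow {M : ℝ | ∃ p : Polynomial ℝ, p.natDegree ≤ r ∧
      ∀ x ∈ Set.Icc (-1 : ℝ) 1, |g x - p.eval x| ≤ M} := by
    refine ⟨0, ?_⟩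
    rintro m ⟨p, _, hp⟩
    exact le_trans (abs_nonneg _) (hp 0 (by norm_num))
  have hdle : d ≤ M / c := hd ▸ csInf_le hbdd hmem
  calc c * d ≤ c * (M / c) := by nlinarith
    _ = M := by field_simp
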